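/- Let S be a monic interval polynomial of degree n. Suppose some P₀ ∈ S is q-unstable (has exactly q roots with positive real part and n − q roots with negative real part), and suppose that for every ω ≥ 0, the pair (Re(g1(S,iω))·Re(g2(S,iω)), Im(h1(S,iω))·Im(h2(S,iω))) does not lie in the closed third quadrant {(x,y) : x ≤ 0, y ≤ 0}. Then the interval polynomial S is q-unstable, i.e., every P ∈ S has exactly q roots with positive real part and n − q with negative real part. -/

import Mathlib

open Polynomial

noncomputable def reg1 (a b : ℕ → ℝ) (n : ℕ) (ω : ℝ) : ℝ :=
  ∑ j ∈ Finset.range (n / 2 + 1),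
    (-1 : ℝ) ^ j * (if Even j then a (2 * j) else b (2 * j)) * ω ^ (2 * j)

noncomputable def reg2 (a b : ℕ → ℝ) (n : ℕ) (ω : ℝ) : ℝ :=
  ∑ j ∈ Finset.range (n / 2 + 1),
    (-1 : ℝ) ^ j * (if Even j then b (2 * j) else a (2 * j)) * ω ^ (2 * j)

noncomputable def imh1 (a b : ℕ → ℝ) (n : ℕ) (ω : ℝ) : ℝ :=
  ∑ j ∈ Finset.range ((n + 1) / 2),
    (-1 : ℝ) ^ j * (if Even j then a (2 * j + 1) else b (2 * j + 1)) * ω ^ (2 * j + 1)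

noncomputable def imh2 (a b : ℕ → ℝ) (n : ℕ) (ω : ℝ) : ℝ :=
  ∑ j ∈ Finset.range ((n + 1) / 2),
    (-1 : ℝ) ^ j * (if Even j then b (2 * j + 1) else a (2 * j + 1)) * ω ^ (2 * j + 1)

def memIntervalPoly (n : ℕ) (a b : ℕ → ℝ) (P : Polynomial ℝ) : Prop :=
  P.Monic ∧ P.natDegree = n ∧ ∀ k, P.coeff k ∈ Set.Icc (a k) (b k)

open scoped Classical in
noncomputable def posRootCount (P : Polynomial ℝ) : ℕ :=
  Multiset.card ((P.map (algebraMap ℝ ℂ)).roots.filter fun z => 0 < z.re)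

open scoped Classical in
noncomputable def negRootCount (P : Polynomial ℝ) : ℕ :=
  Multiset.card ((P.map (algebraMap ℝ ℂ)).roots.filter fun z => z.re < 0)


open Filter

lemma aux_sum_split {M : Type*} [AddCommMonoid M] (f : ℕ → M) (m : ℕ) :
    ∑ k ∈ Finset.range m, f k =
      (∑ j ∈ Finset.range ((m+1)/2), f (2*j)) + ∑ j ∈ Finset.range (m/2), f (2*j+1) := by
  induction m with
  | zero => simp
  | succ m ih =>
    rcases Nat.even_or_odd m with he | ho
    · obtain ⟨c, hc⟩ := he
      have h1 : (m+1+1)/2 = m/2 + 1 := by omega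
      have h2 : (m+1)/2 = m/2 := by omega
      have h3 : 2 * (m/2) = m := by omega
      rw [Finset.sum_range_succ, ih, h1, h2, Finset.sum_range_succ (fun j => f (2*j)) (m/2), h3]
      abel
    · obtain ⟨c, hc⟩ := ho
      have h1 : (m+1+1)/2 = (m+1)/2 := by omega
      have h2 : (m+1)/2 = m/2 + 1 := by omega
      have h3 : 2 * (m/2) + 1 = m := by omega
      rw [Finset.sum_range_succ, ih, h1, h2, Finset.sum_range_succ (fun j => f (2*j+1)) (m/2), h3]
      abel


lemma aux_eval (P : Polynomial ℝ) (n : ℕ) (hd : P.natDegree = n) (ω : ℝ) :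
    (P.map (algebraMap ℝ ℂ)).eval ((ω:ℂ) * Complex.I) =
      ((∑ j ∈ Finset.range (n/2+1), (-1:ℝ)^j * P.coeff (2*j) * ω^(2*j) : ℝ) : ℂ)
      + ((∑ j ∈ Finset.range ((n+1)/2), (-1:ℝ)^j * P.coeff (2*j+1) * ω^(2*j+1) : ℝ) : ℂ)
        * Complex.I := by
  have hmd : (P.map (algebraMap ℝ ℂ)).natDegree < n + 1 :=
    lt_of_le_of_lt (natDegree_map_le.trans hd.le) (Nat.lt_succ_self n)
  rw [eval_eq_sum_range' hmd]
  simp only [coeff_map, Complex.coe_algebraMap]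
  rw [aux_sum_split (fun k => ((P.coeff k : ℂ)) * ((ω:ℂ) * Complex.I)^k) (n+1)]
  have e1 : (n+1+1)/2 = n/2+1 := by omega
  rw [e1]
  have hpe : ∀ j : ℕ, ((ω:ℂ) * Complex.I)^(2*j) = (-1:ℂ)^j * (ω:ℂ)^(2*j) := by
    intro j
    rw [pow_mul, mul_pow, Complex.I_sq, mul_neg_one, neg_pow, ← pow_mul]
  congr 1
  · push_cast
    refine Finset.sum_congr rfl fun j _ => ?_
    rw [hpe j]; ring
  · push_cast
    rw [Finset.sum_mul]
    refine Finset.sum_congr rfl fun j _ => ?_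
    rw [pow_succ, ← mul_assoc, hpe j]; ring

lemma aux_sandwich_re (n : ℕ) (a b : ℕ → ℝ) (P : Polynomial ℝ)
    (hP : memIntervalPoly n a b P) (ω : ℝ) :
    reg1 a b n ω ≤ ∑ j ∈ Finset.range (n/2+1), (-1:ℝ)^j * P.coeff (2*j) * ω^(2*j) ∧
    ∑ j ∈ Finset.range (n/2+1), (-1:ℝ)^j * P.coeff (2*j) * ω^(2*j) ≤ reg2 a b n ω := by
  constructor <;> refine Finset.sum_le_sum fun j _ => ?_ <;>
    rcases Nat.even_or_odd j with hj | hj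
  · rw [if_pos hj, hj.neg_one_pow, one_mul, one_mul]
    exact mul_le_mul_of_nonneg_right (hP.2.2 _).1 (Even.pow_nonneg (even_two_mul j) ω)
  · rw [if_neg (Nat.not_even_iff_odd.mpr hj), hj.neg_one_pow, neg_one_mul, neg_one_mul]
    exact mul_le_mul_of_nonneg_right (neg_le_neg (hP.2.2 _).2)
      (Even.pow_nonneg (even_two_mul j) ω)
  · rw [if_pos hj, hj.neg_one_pow, one_mul, one_mul]
    exact mul_le_mul_of_nonneg_right (hP.2.2 _).2 (Even.pow_nonneg (even_two_mul j) ω)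
  · rw [if_neg (Nat.not_even_iff_odd.mpr hj), hj.neg_one_pow, neg_one_mul, neg_one_mul]
    exact mul_le_mul_of_nonneg_right (neg_le_neg (hP.2.2 _).1)
      (Even.pow_nonneg (even_two_mul j) ω)

lemma aux_sandwich_im (n : ℕ) (a b : ℕ → ℝ) (P : Polynomial ℝ)
    (hP : memIntervalPoly n a b P) (ω : ℝ) (hω : 0 ≤ ω) :
    imh1 a b n ω ≤ ∑ j ∈ Finset.range ((n+1)/2), (-1:ℝ)^j * P.coeff (2*j+1) * ω^(2*j+1) ∧
    ∑ j ∈ Finset.range ((n+1)/2), (-1:ℝ)^j * P.coeff (2*j+1) * ω^(2*j+1) ≤ imh2 a b n ω := by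
  constructor <;> refine Finset.sum_le_sum fun j _ => ?_ <;>
    rcases Nat.even_or_odd j with hj | hj
  · rw [if_pos hj, hj.neg_one_pow, one_mul, one_mul]
    exact mul_le_mul_of_nonneg_right (hP.2.2 _).1 (pow_nonneg hω _)
  · rw [if_neg (Nat.not_even_iff_odd.mpr hj), hj.neg_one_pow, neg_one_mul, neg_one_mul]
    exact mul_le_mul_of_nonneg_right (neg_le_neg (hP.2.2 _).2) (pow_nonneg hω _)
  · rw [if_pos hj, hj.neg_one_pow, one_mul, one_mul]
    exact mul_le_mul_of_nonneg_right (hP.2.2 _).2 (pow_nonneg hω _)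
  · rw [if_neg (Nat.not_even_iff_odd.mpr hj), hj.neg_one_pow, neg_one_mul, neg_one_mul]
    exact mul_le_mul_of_nonneg_right (neg_le_neg (hP.2.2 _).1) (pow_nonneg hω _)

lemma aux_noimag (n : ℕ) (a b : ℕ → ℝ)
    (havoid : ∀ ω : ℝ, 0 ≤ ω →
      ¬ (reg1 a b n ω * reg2 a b n ω ≤ 0 ∧ imh1 a b n ω * imh2 a b n ω ≤ 0))
    (P : Polynomial ℝ) (hP : memIntervalPoly n a b P) :
    ∀ z ∈ (P.map (algebraMap ℝ ℂ)).roots, z.re ≠ 0 := by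
  have hne : ∀ ω : ℝ, 0 ≤ ω →
      (P.map (algebraMap ℝ ℂ)).eval ((ω:ℂ) * Complex.I) ≠ 0 := by
    intro ω hω h0
    rw [aux_eval P n hP.2.1 ω] at h0
    obtain ⟨hr1, hr2⟩ := aux_sandwich_re n a b P hP ω
    obtain ⟨hi1, hi2⟩ := aux_sandwich_im n a b P hP ω hω
    set R := ∑ j ∈ Finset.range (n/2+1), (-1:ℝ)^j * P.coeff (2*j) * ω^(2*j) with hRdef
    set S := ∑ j ∈ Finset.range ((n+1)/2), (-1:ℝ)^j * P.coeff (2*j+1) * ω^(2*j+1) with hSdef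
    have hre : R = 0 := by simpa using congrArg Complex.re h0
    have him : S = 0 := by simpa using congrArg Complex.im h0
    rcases not_and_or.mp (havoid ω hω) with h | h
    · push_neg at h
      nlinarith
    · push_neg at h
      nlinarith
  intro z hz hre0
  have hne0 : P.map (algebraMap ℝ ℂ) ≠ 0 := (hP.1.map _).ne_zero
  have hzr : (P.map (algebraMap ℝ ℂ)).eval z = 0 := by
    exact (Polynomial.mem_roots hne0).mp hz
  rcases le_or_gt 0 z.im with h | h
  · apply hne z.im h
    have hz' : ((z.im : ℝ) : ℂ) * Complex.I = z := by
      apply Complex.ext <;> simp [hre0]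
    rw [hz']; exact hzr
  · apply hne (-z.im) (by linarith)
    have hz' : ((-z.im : ℝ) : ℂ) * Complex.I = (starRingEnd ℂ) z := by
      apply Complex.ext <;> simp [hre0]
    rw [hz']
    rw [Polynomial.eval_map, ← Polynomial.aeval_def, Polynomial.aeval_conj]
    rw [Polynomial.eval_map, ← Polynomial.aeval_def] at hzr
    rw [hzr]; simp

lemma aux_cont {ι : Type*} [DecidableEq ι] (s : Finset ι) :
    ∀ c : ℕ, Continuous fun z : ι → ℂ => (∏ i ∈ s, (X - C (z i))).coeff c := by
  induction s using Finset.induction_on with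
  | empty => intro c; simpa using continuous_const
  | @insert a s ha ih =>
    intro c
    have key : ∀ z : ι → ℂ, (∏ i ∈ insert a s, (X - C (z i))).coeff c
        = (if c = 0 then 0 else (∏ i ∈ s, (X - C (z i))).coeff (c-1))
          - z a * (∏ i ∈ s, (X - C (z i))).coeff c := by
      intro z
      rw [Finset.prod_insert ha, sub_mul, Polynomial.coeff_sub, Polynomial.coeff_C_mul]
      congr 1
      cases c with
      | zero => simp [Polynomial.mul_coeff_zero]
      | succ c => simp [Polynomial.coeff_X_mul]
    apply Continuous.congr _ (fun z => (key z).symm)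
    apply Continuous.sub
    · split_ifs with hc
      · exact continuous_const
      · exact ih (c-1)
    · exact (continuous_apply a).mul (ih c)

lemma aux_exists_vec {α : Type*} (s : Multiset α) (n : ℕ) (h : Multiset.card s = n) :
    ∃ f : Fin n → α, s = Multiset.map f Finset.univ.val := by
  have hl : s.toList.length = n := by rw [Multiset.length_toList, h]
  refine ⟨fun i => s.toList.get (Fin.cast hl.symm i), ?_⟩
  rw [Fin.univ_val_map]
  have hofn : List.ofFn (fun i : Fin n => s.toList.get (Fin.cast hl.symm i)) = s.toList := by
    apply List.ext_get (by simp [hl])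
    intro i h1 h2
    simp [List.get_ofFn]
  rw [hofn, Multiset.coe_toList]

lemma aux_root_bound {p : Polynomial ℂ} (hm : p.Monic) {z : ℂ} (hz : p.eval z = 0) :
    ‖z‖ ≤ 1 + ∑ c ∈ Finset.range p.natDegree, ‖p.coeff c‖ := by
  set n := p.natDegree with hn
  have hS : 0 ≤ ∑ c ∈ Finset.range n, ‖p.coeff c‖ :=
    Finset.sum_nonneg fun _ _ => norm_nonneg _
  rcases le_or_gt ‖z‖ 1 with h | h
  · linarith
  rcases Nat.eq_zero_or_pos n with h0 | h0
  · exfalso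
    have hp1 : p = 1 := hm.natDegree_eq_zero.mp h0
    rw [hp1] at hz; simp at hz
  have heval : p.eval z = (∑ k ∈ Finset.range n, p.coeff k * z^k) + p.coeff n * z^n := by
    rw [eval_eq_sum_range, Finset.sum_range_succ]
  rw [hm.coeff_natDegree, one_mul, hz] at heval
  have hzn : z^n = -∑ k ∈ Finset.range n, p.coeff k * z^k := by
    rw [eq_neg_iff_add_eq_zero]; linear_combination -heval
  have h1 : ‖z‖^n ≤ (∑ c ∈ Finset.range n, ‖p.coeff c‖) * ‖z‖^(n-1) := by
    calc ‖z‖^n = ‖z^n‖ := (norm_pow _ _).symm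
    _ = ‖∑ k ∈ Finset.range n, p.coeff k * z^k‖ := by rw [hzn, norm_neg]
    _ ≤ ∑ k ∈ Finset.range n, ‖p.coeff k * z^k‖ := norm_sum_le _ _
    _ ≤ ∑ k ∈ Finset.range n, ‖p.coeff k‖ * ‖z‖^(n-1) := by
        refine Finset.sum_le_sum fun k hk => ?_
        rw [norm_mul, norm_pow]
        exact mul_le_mul_of_nonneg_left
          (pow_le_pow_right₀ h.le (by have := Finset.mem_range.mp hk; omega))
          (norm_nonneg _)
    _ = (∑ c ∈ Finset.range n, ‖p.coeff c‖) * ‖z‖^(n-1) := (Finset.sum_mul _ _ _).symm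
  have hzpos : 0 < ‖z‖^(n-1) := pow_pos (by linarith) _
  have hmul : ‖z‖ * ‖z‖^(n-1) = ‖z‖^n := by
    rw [← pow_succ']; congr 1; omega
  have : ‖z‖ ≤ ∑ c ∈ Finset.range n, ‖p.coeff c‖ := by
    have h2 : ‖z‖ * ‖z‖^(n-1) ≤ (∑ c ∈ Finset.range n, ‖p.coeff c‖) * ‖z‖^(n-1) := by
      rw [hmul]; exact h1
    exact le_of_mul_le_mul_right h2 hzpos
  linarith

open scoped Classical in
lemma aux_partition (n : ℕ) (p : Polynomial ℂ) (hm : p.Monic) (hd : p.natDegree = n)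
    (hni : ∀ z ∈ p.roots, z.re ≠ 0) :
    Multiset.card (p.roots.filter fun z => 0 < z.re)
      + Multiset.card (p.roots.filter fun z => z.re < 0) = n := by
  have hcard : Multiset.card p.roots = n := by
    rw [← hd]
    exact (Polynomial.splits_iff_card_roots.mp (IsAlgClosed.splits p))
  have h2 : Multiset.filter (fun z : ℂ => ¬ 0 < z.re) p.roots
      = Multiset.filter (fun z : ℂ => z.re < 0) p.roots := by
    refine Multiset.filter_congr fun z hz => ?_
    constructor
    · intro hle; exact lt_of_le_of_ne (not_lt.mp hle) (hni z hz)
    · intro hlt; exact not_lt.mpr hlt.le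
  rw [← h2, ← Multiset.card_add, Multiset.filter_add_not, hcard]

open scoped Classical in
lemma aux_key (n m : ℕ) (p : ℕ → Polynomial ℂ) (pl : Polynomial ℂ)
    (hm : ∀ k, (p k).Monic) (hd : ∀ k, (p k).natDegree = n)
    (hml : pl.Monic) (hdl : pl.natDegree = n)
    (hcoef : ∀ c, Tendsto (fun k => (p k).coeff c) atTop (nhds (pl.coeff c)))
    (hre : ∀ z ∈ pl.roots, z.re ≠ 0)
    (hcount : ∀ k, Multiset.card ((p k).roots.filter fun z => 0 < z.re) = m) :
    Multiset.card (pl.roots.filter fun z => 0 < z.re) = m := by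
  have hcard : ∀ k, Multiset.card (p k).roots = n := fun k => by
    rw [← hd k]
    exact Polynomial.splits_iff_card_roots.mp (IsAlgClosed.splits _)
  choose z hz using fun k => aux_exists_vec ((p k).roots) n (hcard k)
  -- uniform bound on roots
  have hBc : ∀ c : ℕ, ∃ B : ℝ, ∀ k, ‖(p k).coeff c‖ ≤ B := by
    intro c
    obtain ⟨B, hB⟩ := ((hcoef c).norm).bddAbove_range
    exact ⟨B, fun k => hB (Set.mem_range_self k)⟩
  choose B hB using hBc
  set R : ℝ := 1 + ∑ c ∈ Finset.range n, B c with hR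
  have hzb : ∀ k i, z k i ∈ Metric.closedBall (0:ℂ) R := by
    intro k i
    rw [Metric.mem_closedBall, dist_zero_right]
    have hroot : z k i ∈ (p k).roots := by
      rw [hz k]; exact Multiset.mem_map_of_mem _ (by simp)
    have heval : (p k).eval (z k i) = 0 :=
      (Polynomial.mem_roots (hm k).ne_zero).mp hroot
    calc ‖z k i‖ ≤ 1 + ∑ c ∈ Finset.range (p k).natDegree, ‖(p k).coeff c‖ :=
          aux_root_bound (hm k) heval
    _ ≤ R := by
        rw [hd k, hR]
        exact add_le_add_right (Finset.sum_le_sum fun c _ => hB c k) 1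
  have hcpt : IsCompact (Set.univ.pi fun _ : Fin n => Metric.closedBall (0:ℂ) R) :=
    isCompact_univ_pi fun _ => isCompact_closedBall _ _
  obtain ⟨w, hw, φ₁, hφ₁m, hφ₁t⟩ :=
    hcpt.tendsto_subseq (x := z) (fun k => Set.mem_univ_pi.mpr fun i => hzb k i)
  -- constant sign pattern subsequence
  have hpat : ∃ pat : Fin n → Bool,
      ∃ᶠ k in atTop, (fun i => decide (0 < (z (φ₁ k) i).re)) = pat := by
    by_contra hcon
    push_neg at hcon
    have hev : ∀ᶠ k in atTop, ∀ pat : Fin n → Bool,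
        ¬((fun i => decide (0 < (z (φ₁ k) i).re)) = pat) :=
      eventually_all.mpr fun pat => (hcon pat)
    obtain ⟨k, hk⟩ := hev.exists
    exact hk _ rfl
  obtain ⟨pat, hfreq⟩ := hpat
  obtain ⟨φ₂, hφ₂m, hφ₂⟩ := Filter.extraction_of_frequently_atTop hfreq
  set ψ : ℕ → ℕ := φ₁ ∘ φ₂ with hψ
  have hψm : StrictMono ψ := hφ₁m.comp hφ₂m
  have hψt : Tendsto (fun k => z (ψ k)) atTop (nhds w) := by
    exact hφ₁t.comp (hφ₂m.tendsto_atTop)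
  have hcoord : ∀ i, Tendsto (fun k => z (ψ k) i) atTop (nhds (w i)) := by
    intro i
    exact ((continuous_apply i).tendsto w).comp hψt
  -- p k as product over root vector
  have hprod : ∀ k, p k = ∏ i, (X - C (z k i)) := by
    intro k
    have hsplit : (p k).Splits := IsAlgClosed.splits _
    rw [hsplit.eq_prod_roots_of_monic (hm k), hz k,
      Multiset.map_map, Finset.prod_eq_multiset_prod]
    rfl
  -- identify limit
  have hQw : pl = ∏ i, (X - C (w i)) := by
    ext c
    have h1 : Tendsto (fun k => (p (ψ k)).coeff c) atTop (nhds (pl.coeff c)) :=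
      (hcoef c).comp hψm.tendsto_atTop
    have h2 : Tendsto (fun k => (p (ψ k)).coeff c) atTop
        (nhds ((∏ i, (X - C (w i))).coeff c)) := by
      have hc := ((aux_cont (Finset.univ : Finset (Fin n)) c).tendsto w).comp hψt
      exact Tendsto.congr (fun k => by simp only [Function.comp_apply]; rw [← hprod (ψ k)]) hc
    exact tendsto_nhds_unique h1 h2
  have hroots : pl.roots = Multiset.map w Finset.univ.val := by
    rw [hQw, Finset.prod_eq_multiset_prod]
    have hmm : Multiset.map (fun i => X - C (w i)) Finset.univ.val
        = Multiset.map (fun a => X - C a) (Multiset.map w Finset.univ.val) := by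
      rw [Multiset.map_map]; rfl
    rw [hmm, roots_multiset_prod_X_sub_C]
  -- sign equivalence
  have hsign : ∀ i : Fin n, ((0:ℝ) < (w i).re ↔ (0:ℝ) < (z (ψ 0) i).re) := by
    intro i
    have hwroot : (w i).re ≠ 0 :=
      hre (w i) (by rw [hroots]; exact Multiset.mem_map_of_mem _ (by simp))
    have hconst : ∀ k, (decide ((0:ℝ) < (z (ψ k) i).re)) = pat i := fun k =>
      congrFun (hφ₂ k) i
    have hret : Tendsto (fun k => (z (ψ k) i).re) atTop (nhds ((w i).re)) :=
      (Complex.continuous_re.tendsto _).comp (hcoord i)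
    cases hb : pat i with
    | false =>
      have hle : ∀ k, (z (ψ k) i).re ≤ 0 := fun k =>
        not_lt.mp (of_decide_eq_false ((hconst k).trans hb))
      have hwle : (w i).re ≤ 0 := le_of_tendsto hret (Eventually.of_forall hle)
      exact iff_of_false (not_lt.mpr (lt_of_le_of_ne hwle hwroot).le)
        (not_lt.mpr (hle 0))
    | true =>
      have hlt : ∀ k, (0:ℝ) < (z (ψ k) i).re := fun k =>
        of_decide_eq_true ((hconst k).trans hb)
      have hwge : 0 ≤ (w i).re :=
        ge_of_tendsto hret (Eventually.of_forall fun k => (hlt k).le)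
      exact iff_of_true (lt_of_le_of_ne hwge (Ne.symm hwroot)) (hlt 0)
  -- counting
  rw [hroots, ← hcount (ψ 0), hz (ψ 0)]
  rw [← Multiset.countP_eq_card_filter, ← Multiset.countP_eq_card_filter,
    Multiset.countP_map, Multiset.countP_map]
  congr 1
  exact Multiset.filter_congr fun i _ => hsign i

/-- Kharitonov-type result for `q`-instability: if some member `P₀` is `q`-unstable and
for every `ω ≥ 0` the pair of products avoids the closed third quadrant, then every member
of the interval family is `q`-unstable. -/
theorem interval_q_unstable (n q : ℕ) (a b : ℕ → ℝ) (han : a n = 1) (hbn : b n = 1)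
    (P₀ : Polynomial ℝ) (hP₀ : memIntervalPoly n a b P₀)
    (hpos₀ : posRootCount P₀ = q) (hneg₀ : negRootCount P₀ = n - q)
    (havoid : ∀ ω : ℝ, 0 ≤ ω →
      ¬ (reg1 a b n ω * reg2 a b n ω ≤ 0 ∧ imh1 a b n ω * imh2 a b n ω ≤ 0)) :
    ∀ P : Polynomial ℝ, memIntervalPoly n a b P →
      posRootCount P = q ∧ negRootCount P = n - q := by
  intro P hP
  set Pt : ℝ → Polynomial ℝ := fun t => (1 - t) • P₀ + t • P with hPtdef
  have hcoeffPt : ∀ t k, (Pt t).coeff k = (1-t) * P₀.coeff k + t * P.coeff k := by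
    intro t k
    simp [hPtdef, Polynomial.coeff_smul, smul_eq_mul]
  have hc0 : P₀.coeff n = 1 := by rw [← hP₀.2.1]; exact hP₀.1.coeff_natDegree
  have hcP : P.coeff n = 1 := by rw [← hP.2.1]; exact hP.1.coeff_natDegree
  have hmem : ∀ t : ℝ, t ∈ Set.Icc (0:ℝ) 1 → memIntervalPoly n a b (Pt t) := by
    intro t ht
    have hcn : (Pt t).coeff n = 1 := by rw [hcoeffPt, hc0, hcP]; ring
    have hhigh : ∀ k, n < k → (Pt t).coeff k = 0 := by
      intro k hk
      rw [hcoeffPt,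
        Polynomial.coeff_eq_zero_of_natDegree_lt (hP₀.2.1 ▸ hk : P₀.natDegree < k),
        Polynomial.coeff_eq_zero_of_natDegree_lt (hP.2.1 ▸ hk : P.natDegree < k)]
      ring
    have hdeg : (Pt t).natDegree = n :=
      le_antisymm (Polynomial.natDegree_le_iff_coeff_eq_zero.mpr hhigh)
        (Polynomial.le_natDegree_of_ne_zero (hcn ▸ one_ne_zero))
    refine ⟨?_, hdeg, ?_⟩
    · rw [Polynomial.Monic, Polynomial.leadingCoeff, hdeg, hcn]
    · intro k
      obtain ⟨h0l, h0r⟩ := hP₀.2.2 k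
      obtain ⟨hl, hr⟩ := hP.2.2 k
      rw [hcoeffPt]
      constructor <;> nlinarith [ht.1, ht.2]
  have hnoimag : ∀ Q, memIntervalPoly n a b Q →
      ∀ z ∈ (Q.map (algebraMap ℝ ℂ)).roots, z.re ≠ 0 :=
    fun Q hQ => aux_noimag n a b havoid Q hQ
  have hmapdata : ∀ Q : Polynomial ℝ, memIntervalPoly n a b Q →
      (Q.map (algebraMap ℝ ℂ)).Monic ∧ (Q.map (algebraMap ℝ ℂ)).natDegree = n := by
    intro Q hQ
    refine ⟨hQ.1.map _, ?_⟩
    rw [hQ.1.natDegree_map, hQ.2.1]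
  have hpart : ∀ Q, memIntervalPoly n a b Q →
      posRootCount Q + negRootCount Q = n := by
    intro Q hQ
    exact aux_partition n _ (hmapdata Q hQ).1 (hmapdata Q hQ).2 (hnoimag Q hQ)
  haveI : ConnectedSpace (Set.Icc (0:ℝ) 1) :=
    Subtype.connectedSpace (isConnected_Icc zero_le_one)
  set G : Set.Icc (0:ℝ) 1 → ℕ := fun t => posRootCount (Pt t) with hGdef
  have hGseq : ∀ m, IsClosed {t : Set.Icc (0:ℝ) 1 | G t = m} := by
    intro m
    apply IsSeqClosed.isClosed
    intro x t hx hlim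
    show posRootCount (Pt t) = m
    have hxt : Tendsto (fun k => ((x k : ℝ))) atTop (nhds (t:ℝ)) :=
      ((continuous_subtype_val.tendsto t).comp hlim)
    refine aux_key n m (fun k => (Pt (x k : ℝ)).map (algebraMap ℝ ℂ))
      ((Pt (t:ℝ)).map (algebraMap ℝ ℂ))
      (fun k => (hmapdata _ (hmem _ (x k).2)).1)
      (fun k => (hmapdata _ (hmem _ (x k).2)).2)
      (hmapdata _ (hmem _ t.2)).1 (hmapdata _ (hmem _ t.2)).2
      ?_ (hnoimag _ (hmem _ t.2)) (fun k => hx k)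
    intro c
    simp only [Polynomial.coeff_map, hcoeffPt, Complex.coe_algebraMap]
    have hreal : Tendsto (fun k => (1 - (x k:ℝ)) * P₀.coeff c + (x k:ℝ) * P.coeff c)
        atTop (nhds ((1 - (t:ℝ)) * P₀.coeff c + (t:ℝ) * P.coeff c)) :=
      ((tendsto_const_nhds.sub hxt).mul tendsto_const_nhds).add
        (hxt.mul tendsto_const_nhds)
    exact (Complex.continuous_ofReal.tendsto _).comp hreal
  have hGle : ∀ t, G t ≤ n := by
    intro t
    have := hpart (Pt t) (hmem t t.2)
    show posRootCount (Pt (t:ℝ)) ≤ n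
    omega
  have hclosed : IsClosed {t : Set.Icc (0:ℝ) 1 | G t = q} := hGseq q
  have hopen : IsOpen {t : Set.Icc (0:ℝ) 1 | G t = q} := by
    rw [← isClosed_compl_iff]
    have hceq : {t : Set.Icc (0:ℝ) 1 | G t = q}ᶜ
        = ⋃ m ∈ ((Finset.range (n+1)).erase q), {t : Set.Icc (0:ℝ) 1 | G t = m} := by
      ext t
      simp only [Set.mem_compl_iff, Set.mem_setOf_eq, Set.mem_iUnion,
        Finset.mem_erase, Finset.mem_range, Nat.lt_succ_iff]
      constructor
      · intro h
        exact ⟨G t, ⟨h, hGle t⟩, rfl⟩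
      · rintro ⟨m, ⟨hm, _⟩, rfl⟩
        exact hm
    rw [hceq]
    exact isClosed_biUnion_finset fun m _ => hGseq m
  have hne : (⟨0, by norm_num⟩ : Set.Icc (0:ℝ) 1) ∈ {t : Set.Icc (0:ℝ) 1 | G t = q} := by
    show posRootCount (Pt 0) = q
    have h0 : Pt 0 = P₀ := by simp [hPtdef]
    rw [h0]; exact hpos₀
  have huniv : {t : Set.Icc (0:ℝ) 1 | G t = q} = Set.univ :=
    IsClopen.eq_univ ⟨hclosed, hopen⟩ ⟨_, hne⟩
  have h1mem : (⟨1, by norm_num⟩ : Set.Icc (0:ℝ) 1) ∈ {t : Set.Icc (0:ℝ) 1 | G t = q} := by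
    rw [huniv]; trivial
  have hposP : posRootCount P = q := by
    have h1 : Pt 1 = P := by simp [hPtdef]
    have := h1mem
    simp only [Set.mem_setOf_eq, hGdef] at this
    rw [h1] at this
    exact this
  have := hpart P hP
  exact ⟨hposP, by omega⟩
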